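/- Let A ∈ ℝ^{n×d} with spectral norm σ = ‖A‖_op, λ > 0, x* the ridge regression minimizer of cost(x) = ‖Ax − b‖² + λ‖x‖², and Opt = cost(x*). If a vector x̃ satisfies ‖x̃ − x*‖ ≤ ε‖x*‖, then cost(x̃) ≤ (1 + (1 + σ²/λ)ε²)·Opt. -/

import Mathlib

open Matrix

/-- If `σ = ‖A‖_op`, `l > 0`, `x*` is the ridge minimizer,
`Opt = cost x*`, and `‖x̃ - x*‖ ≤ ε ‖x*‖`, then
`cost x̃ ≤ (1 + (1 + σ²/l) ε²) · Opt`. -/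
theorem ridge_cost_of_close_solution
    (n d : ℕ) (A : Matrix (Fin n) (Fin d) ℝ) (b : Fin n → ℝ) (l : ℝ) (hl : 0 < l)
    (σ : ℝ)
    (hσ : σ = ‖(LinearMap.toContinuousLinearMap
        (Matrix.toEuclideanLin A : EuclideanSpace ℝ (Fin d) →ₗ[ℝ] EuclideanSpace ℝ (Fin n)))‖)
    (cost : (Fin d → ℝ) → ℝ)
    (hcost : ∀ x, cost x = (∑ i, (A.mulVec x i - b i) ^ 2) + l * ∑ j, x j ^ 2)
    (xstar : Fin d → ℝ)
    (hxstar : ∀ x, cost xstar ≤ cost x)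
    (Opt : ℝ) (hOpt : Opt = cost xstar)
    (ε : ℝ) (hε : 0 ≤ ε)
    (xt : Fin d → ℝ)
    (hclose : Real.sqrt (∑ j, (xt j - xstar j) ^ 2) ≤ ε * Real.sqrt (∑ j, xstar j ^ 2)) :
    cost xt ≤ (1 + (1 + σ ^ 2 / l) * ε ^ 2) * Opt := by
  set e : Fin d → ℝ := fun j => xt j - xstar j with he
  set C : ℝ := (∑ i, (A.mulVec xstar i - b i) * A.mulVec e i) + l * ∑ j, xstar j * e j with hC
  set Q : ℝ := (∑ i, (A.mulVec e i) ^ 2) + l * ∑ j, e j ^ 2 with hQ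
  clear_value C Q
  have hmv : ∀ (t : ℝ) (i : Fin n),
      A.mulVec (fun j => xstar j + t * e j) i = A.mulVec xstar i + t * A.mulVec e i := by
    intro t i
    simp only [Matrix.mulVec, dotProduct, mul_add, Finset.sum_add_distrib, Finset.mul_sum]
    congr 1
    exact Finset.sum_congr rfl fun x _ => by ring
  have expand : ∀ t : ℝ, cost (fun j => xstar j + t * e j)
      = cost xstar + 2 * t * C + t ^ 2 * Q := by
    intro t
    rw [hcost, hcost, hC, hQ]
    have h1 : (∑ i, (A.mulVec (fun j => xstar j + t * e j) i - b i) ^ 2)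
        = ∑ i, ((A.mulVec xstar i - b i) ^ 2
            + 2 * t * ((A.mulVec xstar i - b i) * A.mulVec e i)
            + t ^ 2 * (A.mulVec e i) ^ 2) := by
      refine Finset.sum_congr rfl fun i _ => ?_
      rw [hmv t i]; ring
    have h2 : (∑ j, (xstar j + t * e j) ^ 2)
        = ∑ j, (xstar j ^ 2 + 2 * t * (xstar j * e j) + t ^ 2 * e j ^ 2) := by
      refine Finset.sum_congr rfl fun j _ => ?_; ring
    rw [h1, h2]
    simp only [Finset.sum_add_distrib, ← Finset.mul_sum]
    ring
  have hQ0 : 0 ≤ Q := by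
    rw [hQ]
    have := Finset.sum_nonneg (fun i (_ : i ∈ Finset.univ) => sq_nonneg (A.mulVec e i))
    have := Finset.sum_nonneg (fun j (_ : j ∈ Finset.univ) => sq_nonneg (e j))
    nlinarith
  have hC0 : C = 0 := by
    have h := hxstar (fun j => xstar j + (-C / (Q + 1)) * e j)
    rw [expand (-C / (Q + 1))] at h
    have hQ1 : 0 < Q + 1 := by linarith
    have key : 0 ≤ 2 * (-C / (Q + 1)) * C + (-C / (Q + 1)) ^ 2 * Q := by linarith
    have heq : (Q + 1) ^ 2 * (2 * (-C / (Q + 1)) * C + (-C / (Q + 1)) ^ 2 * Q)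
        = -(C ^ 2) * (Q + 2) := by
      field_simp
      ring
    have key2 : 0 ≤ -(C ^ 2) * (Q + 2) := heq ▸ mul_nonneg (by positivity) key
    nlinarith [sq_nonneg C]
  have hcxt : cost xt = cost xstar + Q := by
    have h1 := expand 1
    rw [hC0] at h1
    have hid : xt = fun j => xstar j + 1 * e j := by
      funext j; simp only [he]; ring
    rw [hid]
    rw [h1]; ring
  -- operator norm bound
  have hσ0 : 0 ≤ σ := hσ ▸ norm_nonneg _
  have hAe : ∑ i, (A.mulVec e i) ^ 2 ≤ σ ^ 2 * ∑ j, e j ^ 2 := by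
    set T := LinearMap.toContinuousLinearMap
        (Matrix.toEuclideanLin A : EuclideanSpace ℝ (Fin d) →ₗ[ℝ] EuclideanSpace ℝ (Fin n))
    set v : EuclideanSpace ℝ (Fin d) := (WithLp.equiv 2 (Fin d → ℝ)).symm e
    have hTv : T v = (WithLp.equiv 2 (Fin n → ℝ)).symm (A.mulVec e) := by
      simp only [T, LinearMap.coe_toContinuousLinearMap']
      exact Matrix.toEuclideanLin_toLp A e
    have hb := T.le_opNorm v
    rw [hTv, ← hσ] at hb
    have h1 : ‖(WithLp.equiv 2 (Fin n → ℝ)).symm (A.mulVec e)‖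
        = Real.sqrt (∑ i, (A.mulVec e i) ^ 2) := by
      rw [EuclideanSpace.norm_eq]
      congr 1; refine Finset.sum_congr rfl fun i _ => ?_
      simp only [WithLp.equiv_symm_apply, WithLp.ofLp_toLp, Real.norm_eq_abs, sq_abs]
    have h2 : ‖v‖ = Real.sqrt (∑ j, e j ^ 2) := by
      rw [EuclideanSpace.norm_eq]
      congr 1; refine Finset.sum_congr rfl fun j _ => ?_
      simp only [v, WithLp.equiv_symm_apply, WithLp.ofLp_toLp, Real.norm_eq_abs, sq_abs]
    rw [h1, h2] at hb
    have hs1 : 0 ≤ Real.sqrt (∑ i, (A.mulVec e i) ^ 2) := Real.sqrt_nonneg _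
    have hs2 : Real.sqrt (∑ i, (A.mulVec e i) ^ 2) ^ 2 = ∑ i, (A.mulVec e i) ^ 2 :=
      Real.sq_sqrt (Finset.sum_nonneg fun i _ => sq_nonneg _)
    have hs3 : Real.sqrt (∑ j, e j ^ 2) ^ 2 = ∑ j, e j ^ 2 :=
      Real.sq_sqrt (Finset.sum_nonneg fun j _ => sq_nonneg _)
    nlinarith [Real.sqrt_nonneg (∑ j, e j ^ 2)]
  have hesq : ∑ j, e j ^ 2 ≤ ε ^ 2 * ∑ j, xstar j ^ 2 := by
    have hre : (∑ j, (xt j - xstar j) ^ 2) = ∑ j, e j ^ 2 :=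
      Finset.sum_congr rfl fun j _ => by simp only [he]
    rw [hre] at hclose
    have hs2 : Real.sqrt (∑ j, e j ^ 2) ^ 2 = ∑ j, e j ^ 2 :=
      Real.sq_sqrt (Finset.sum_nonneg fun j _ => sq_nonneg _)
    have hs3 : Real.sqrt (∑ j, xstar j ^ 2) ^ 2 = ∑ j, xstar j ^ 2 :=
      Real.sq_sqrt (Finset.sum_nonneg fun j _ => sq_nonneg _)
    have h4 := pow_le_pow_left₀ (Real.sqrt_nonneg (∑ j, e j ^ 2)) hclose 2
    rw [hs2, mul_pow, hs3] at h4
    exact h4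
  have hOptlb : l * ∑ j, xstar j ^ 2 ≤ Opt := by
    rw [hOpt, hcost]
    have := Finset.sum_nonneg (fun i (_ : i ∈ Finset.univ) => sq_nonneg (A.mulVec xstar i - b i))
    linarith
  have hOpt0 : 0 ≤ Opt := by
    rw [hOpt, hcost]
    have := Finset.sum_nonneg (fun i (_ : i ∈ Finset.univ) => sq_nonneg (A.mulVec xstar i - b i))
    have := Finset.sum_nonneg (fun j (_ : j ∈ Finset.univ) => sq_nonneg (xstar j))
    nlinarith
  have hQle : Q ≤ (σ ^ 2 + l) * (ε ^ 2 * ∑ j, xstar j ^ 2) := by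
    rw [hQ]
    calc (∑ i, (A.mulVec e i) ^ 2) + l * ∑ j, e j ^ 2
        ≤ σ ^ 2 * ∑ j, e j ^ 2 + l * ∑ j, e j ^ 2 := by linarith [hAe]
      _ = (σ ^ 2 + l) * ∑ j, e j ^ 2 := by ring
      _ ≤ (σ ^ 2 + l) * (ε ^ 2 * ∑ j, xstar j ^ 2) :=
          mul_le_mul_of_nonneg_left hesq (by positivity)
  have hfin : (σ ^ 2 + l) * (ε ^ 2 * ∑ j, xstar j ^ 2) ≤ (1 + σ ^ 2 / l) * ε ^ 2 * Opt := by
    have h1 : (1 + σ ^ 2 / l) * ε ^ 2 * Opt ≥ (1 + σ ^ 2 / l) * ε ^ 2 * (l * ∑ j, xstar j ^ 2) := by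
      have : 0 ≤ (1 + σ ^ 2 / l) * ε ^ 2 := by positivity
      nlinarith
    have h2 : (1 + σ ^ 2 / l) * ε ^ 2 * (l * ∑ j, xstar j ^ 2)
        = (σ ^ 2 + l) * (ε ^ 2 * ∑ j, xstar j ^ 2) := by
      field_simp; ring
    linarith
  rw [hcxt, ← hOpt]
  linarith [hQle, hfin]
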